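/- arXiv:2410.04887 — 2 statements merged into one kernel-verified Lean document; each statement's English description precedes it below -/
import Mathlib

section
/- Consider λ-regularized gradient descent on the square loss of a network ending in linear layers, so that for each linear layer ℓ ∈ {L1+1,…,L} the update is W_ℓ^{k+1} = (1−ηλ)W_ℓ^k − η T_ℓ^k, where T_ℓ^k = (W_{ℓ+1}^k)^⊤⋯(W_L^k)^⊤ (Z_L^k − Y)(Z_{L1}^k)^⊤ (W_{L1+1}^k)^⊤⋯(W_{ℓ−1}^k)^⊤ (empty products understood as identity matrices). Define the balancedness gap D_ℓ^k = (W_{ℓ+1}^k)^⊤ W_{ℓ+1}^k − W_ℓ^k (W_ℓ^k)^⊤. Then for every ℓ ∈ {L1+1,…,L−1} the exact recursion D_ℓ^{k+1} = (1−ηλ)² D_ℓ^k + η² ((T_{ℓ+1}^k)^⊤ T_{ℓ+1}^k − T_ℓ^k (T_ℓ^k)^⊤) holds. -/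
open Matrix Finset Real

/-- Frobenius norm of a real matrix. -/
noncomputable def frobNorm {m n : ℕ} (A : Matrix (Fin m) (Fin n) ℝ) : ℝ :=
  Real.sqrt (∑ i, ∑ j, (A i j) ^ 2)

/-- Operator (spectral) norm of a real matrix. -/
noncomputable def opNorm {m n : ℕ} (A : Matrix (Fin m) (Fin n) ℝ) : ℝ :=
  sSup {x : ℝ | ∃ v : Fin n → ℝ, (∑ i, v i ^ 2) ≤ 1 ∧ x = Real.sqrt (∑ i, (A.mulVec v i) ^ 2)}

/-- The singular values of a real matrix, in non-increasing order (indexed by columns). -/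
noncomputable def svals {m n : ℕ} (A : Matrix (Fin m) (Fin n) ℝ) : Fin n → ℝ := fun i =>
  Real.sqrt ((Matrix.isHermitian_conjTranspose_mul_self A).eigenvalues
    (Tuple.sort ((Matrix.isHermitian_conjTranspose_mul_self A).eigenvalues) i.rev))

/-- `sval A k` is the `k`-th largest singular value of `A` (1-indexed). -/
noncomputable def sval {m n : ℕ} (A : Matrix (Fin m) (Fin n) ℝ) (k : ℕ) : ℝ :=
  if h : k - 1 < n then svals A ⟨k - 1, h⟩ else 0

/-- Smallest singular value of a (possibly rectangular) matrix. -/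
noncomputable def smin {m n : ℕ} (A : Matrix (Fin m) (Fin n) ℝ) : ℝ :=
  sval A (min m n)

/-- Condition number: the ratio between the largest and the smallest *nonzero*
singular values, i.e. the supremum of ratios of nonzero singular values. -/
noncomputable def kappa {m n : ℕ} (A : Matrix (Fin m) (Fin n) ℝ) : ℝ :=
  sSup {x : ℝ | ∃ i j : Fin n, svals A i ≠ 0 ∧ svals A j ≠ 0 ∧ x = svals A i / svals A j}

/-- the exact recursion satisfied by the balancedness gap
`D_ℓ = W_{ℓ+1}ᵀW_{ℓ+1} − W_ℓW_ℓᵀ` under one step of `λ`-regularized gradient descent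
on the square loss. -/
theorem statement7
    (L1 L2 L : ℕ) (hL2 : 2 ≤ L2) (hLdef : L = L1 + L2)
    (n : ℕ → ℕ) (N K : ℕ) (hK : n L = K)
    (σ : ℝ → ℝ)
    -- weights at step k and step k+1
    (W W' : ∀ ℓ : ℕ, Matrix (Fin (n ℓ)) (Fin (n (ℓ - 1))) ℝ)
    (X : Matrix (Fin (n 0)) (Fin N) ℝ)
    (Y : Matrix (Fin (n L)) (Fin N) ℝ)
    -- layer outputs at step k
    (Z : ∀ ℓ : ℕ, Matrix (Fin (n ℓ)) (Fin N) ℝ)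
    (hZ0 : Z 0 = X)
    (hZnl : ∀ ℓ, 1 ≤ ℓ → ℓ ≤ L1 → Z ℓ = (W ℓ * Z (ℓ - 1)).map σ)
    (hZlin : ∀ ℓ, L1 + 1 ≤ ℓ → ℓ ≤ L → Z ℓ = W ℓ * Z (ℓ - 1))
    -- partial products at step k: G ℓ = W_L ⋯ W_{ℓ+1}, H ℓ = W_ℓ ⋯ W_{L1+1}
    (G : ∀ ℓ : ℕ, Matrix (Fin (n L)) (Fin (n ℓ)) ℝ)
    (hGL : G L = 1)
    (hGrec : ∀ ℓ, L1 ≤ ℓ → ℓ < L → G ℓ = G (ℓ + 1) * W (ℓ + 1))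
    (H : ∀ ℓ : ℕ, Matrix (Fin (n ℓ)) (Fin (n L1)) ℝ)
    (hHL1 : H L1 = 1)
    (hHrec : ∀ ℓ, L1 + 1 ≤ ℓ → ℓ ≤ L → H ℓ = W ℓ * H (ℓ - 1))
    -- the gradient of the square loss with respect to the linear layers
    (T : ∀ ℓ : ℕ, Matrix (Fin (n ℓ)) (Fin (n (ℓ - 1))) ℝ)
    (hT : ∀ ℓ, L1 + 1 ≤ ℓ → ℓ ≤ L →
      T ℓ = (G ℓ)ᵀ * (Z L - Y) * (Z L1)ᵀ * (H (ℓ - 1))ᵀ)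
    -- the gradient descent update with learning rate η and weight decay λ
    (η lam : ℝ)
    (hupd : ∀ ℓ, L1 + 1 ≤ ℓ → ℓ ≤ L → W' ℓ = (1 - η * lam) • W ℓ - η • T ℓ) :
    ∀ ℓ, L1 + 1 ≤ ℓ → ℓ ≤ L - 1 →
      (show Matrix (Fin (n ℓ)) (Fin (n ℓ)) ℝ from (W' (ℓ + 1))ᵀ * W' (ℓ + 1)) -
          W' ℓ * (W' ℓ)ᵀ =
        (1 - η * lam) ^ 2 •
          ((show Matrix (Fin (n ℓ)) (Fin (n ℓ)) ℝ from (W (ℓ + 1))ᵀ * W (ℓ + 1)) -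
            W ℓ * (W ℓ)ᵀ) +
        η ^ 2 •
          ((show Matrix (Fin (n ℓ)) (Fin (n ℓ)) ℝ from (T (ℓ + 1))ᵀ * T (ℓ + 1)) -
            T ℓ * (T ℓ)ᵀ) := by
  intro ℓ h1 h2
  have hLge : L1 + 2 ≤ L := by omega
  have hupd1 := hupd ℓ h1 (by omega)
  have hupd2 := hupd (ℓ + 1) (by omega) (by omega)
  have key : (W (ℓ + 1))ᵀ * T (ℓ + 1) = T ℓ * (W ℓ)ᵀ := by
    rw [hT (ℓ + 1) (by omega) (by omega), hT ℓ h1 (by omega),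
      hGrec ℓ (by omega) (by omega)]
    rw [show H (ℓ + 1 - 1) = W ℓ * H (ℓ - 1) from hHrec ℓ h1 (by omega)]
    simp [Matrix.transpose_mul, Matrix.mul_assoc]
  have key2 : (T (ℓ + 1))ᵀ * W (ℓ + 1) = W ℓ * (T ℓ)ᵀ := by
    have := congrArg Matrix.transpose key
    simpa [Matrix.transpose_mul] using this
  rw [hupd1, hupd2]
  simp only [Matrix.transpose_sub, Matrix.transpose_smul, Matrix.sub_mul, Matrix.mul_sub,
    Matrix.smul_mul, Matrix.mul_smul, smul_smul, key, key2, smul_sub, smul_add]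
  ring_nf
  module
end

section
/- Suppose the linear layers of a network are exactly balanced, i.e., W_ℓ W_ℓ^⊤ = W_{ℓ+1}^⊤ W_{ℓ+1} for every ℓ ∈ {L1+1,…,L−1}. Then (W_L W_L^⊤)^{L2} = W_{L:L1+1} W_{L:L1+1}^⊤, and consequently κ(W_L)^{L2} = κ(W_{L:L1+1}), where L2 = L − L1. -/
open Matrix Finset Real

section AuxStatement16

/-- `M` has an eigenpair with eigenvalue `μ`. -/
def HasPair {N : ℕ} (M : Matrix (Fin N) (Fin N) ℝ) (μ : ℝ) : Prop :=
  ∃ v : Fin N → ℝ, v ≠ 0 ∧ M *ᵥ v = μ • v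

lemma dot_self_pos {N : ℕ} {v : Fin N → ℝ} (hv : v ≠ 0) : 0 < v ⬝ᵥ v := by
  obtain ⟨i, hi⟩ := Function.ne_iff.mp hv
  unfold dotProduct
  apply Finset.sum_pos' (fun j _ => mul_self_nonneg _)
  exact ⟨i, Finset.mem_univ i, mul_self_pos.mpr hi⟩

lemma pair_nonneg {m k : ℕ} (A : Matrix (Fin m) (Fin k) ℝ) {μ : ℝ}
    (h : HasPair (Aᵀ * A) μ) : 0 ≤ μ := by
  obtain ⟨v, hv, hMv⟩ := h
  have h1 : v ⬝ᵥ ((Aᵀ * A) *ᵥ v) = (A *ᵥ v) ⬝ᵥ (A *ᵥ v) := by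
    rw [← Matrix.mulVec_mulVec, Matrix.dotProduct_mulVec v Aᵀ, Matrix.vecMul_transpose]
  have h2 : v ⬝ᵥ (μ • v) = μ * (v ⬝ᵥ v) := dotProduct_smul μ v v
  rw [hMv, h2] at h1
  have hpos := dot_self_pos hv
  have hq : 0 ≤ (A *ᵥ v) ⬝ᵥ (A *ᵥ v) :=
    Finset.sum_nonneg fun j _ => mul_self_nonneg _
  nlinarith

lemma transpose_eq_of_isHermitian {N : ℕ} {M : Matrix (Fin N) (Fin N) ℝ}
    (hM : M.IsHermitian) : Mᵀ = M := by
  ext i j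
  have h2 := congrFun (congrFun hM i) j
  rwa [Matrix.conjTranspose_apply, star_trivial] at h2

lemma isHermitian_of_symm {N : ℕ} {M : Matrix (Fin N) (Fin N) ℝ} (h : Mᵀ = M) :
    M.IsHermitian := by
  ext i j
  rw [Matrix.conjTranspose_apply, star_trivial]
  exact congrFun (congrFun h i) j

/-- Uniqueness of eigenvalues given an orthonormal eigenbasis. -/
lemma pair_eq_of_basis {N : ℕ} {M : Matrix (Fin N) (Fin N) ℝ} (hM : Mᵀ = M)
    (b : OrthonormalBasis (Fin N) ℝ (EuclideanSpace ℝ (Fin N))) (d : Fin N → ℝ)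
    (hb : ∀ i, M *ᵥ ⇑(b i) = d i • ⇑(b i))
    {μ : ℝ} (h : HasPair M μ) : ∃ i, d i = μ := by
  obtain ⟨v, hv, hMv⟩ := h
  set c : Fin N → ℝ := fun i => ⇑(b i) ⬝ᵥ v with hc
  have key : ∀ i, d i * c i = μ * c i := by
    intro i
    have h1 : ⇑(b i) ⬝ᵥ (M *ᵥ v) = (M *ᵥ ⇑(b i)) ⬝ᵥ v := by
      rw [Matrix.dotProduct_mulVec, ← Matrix.vecMul_transpose, hM]
    rw [hMv] at h1
    rw [hb i] at h1
    rw [dotProduct_smul, smul_dotProduct] at h1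
    simpa [hc] using h1.symm
  have hex : ∃ i, c i ≠ 0 := by
    by_contra hall
    push_neg at hall
    apply hv
    have hrepr : b.repr ((WithLp.equiv 2 (Fin N → ℝ)).symm v) = 0 := by
      ext i
      rw [b.repr_apply_apply]
      have h3 : (inner ℝ (b i) ((WithLp.equiv 2 (Fin N → ℝ)).symm v) : ℝ) = c i := by
        rw [PiLp.inner_apply]
        simp [hc, dotProduct, mul_comm]
      convert h3.trans (hall i) using 1
      simp
    have h0 : (WithLp.equiv 2 (Fin N → ℝ)).symm v = 0 := b.repr.map_eq_zero_iff.mp hrepr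
    funext j
    exact congrFun (congrArg (WithLp.equiv 2 (Fin N → ℝ)) h0) j
  obtain ⟨i, hi⟩ := hex
  exact ⟨i, mul_right_cancel₀ hi (key i)⟩

lemma pow_mulVec {N : ℕ} {M : Matrix (Fin N) (Fin N) ℝ} {v : Fin N → ℝ} {μ : ℝ}
    (h : M *ᵥ v = μ • v) (k : ℕ) : (M ^ k) *ᵥ v = μ ^ k • v := by
  induction k with
  | zero => simp
  | succ k ih =>
    rw [pow_succ', ← Matrix.mulVec_mulVec, ih, Matrix.mulVec_smul, h, smul_smul, ← pow_succ]

lemma hasPair_swap {m k : ℕ} (A : Matrix (Fin m) (Fin k) ℝ) {μ : ℝ} (hμ : μ ≠ 0)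
    (h : HasPair (Aᵀ * A) μ) : HasPair (A * Aᵀ) μ := by
  obtain ⟨v, hv, hMv⟩ := h
  have hAv : Aᵀ *ᵥ (A *ᵥ v) = μ • v := by rw [Matrix.mulVec_mulVec, hMv]
  refine ⟨A *ᵥ v, ?_, ?_⟩
  · intro hw
    apply hv
    rw [hw, Matrix.mulVec_zero] at hAv
    rcases smul_eq_zero.mp hAv.symm with h' | h'
    · exact absurd h' hμ
    · exact h'
  · rw [← Matrix.mulVec_mulVec, hAv, Matrix.mulVec_smul]

/-- For a symmetric matrix, `HasPair` eigenvalues are exactly the `eigenvalues`. -/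
lemma hasPair_iff_eig {N : ℕ} {M : Matrix (Fin N) (Fin N) ℝ} (hM : M.IsHermitian) {μ : ℝ} :
    HasPair M μ ↔ ∃ i, hM.eigenvalues i = μ := by
  constructor
  · intro h
    exact pair_eq_of_basis (transpose_eq_of_isHermitian hM) hM.eigenvectorBasis hM.eigenvalues
      (fun i => hM.mulVec_eigenvectorBasis i) h
  · rintro ⟨i, rfl⟩
    refine ⟨⇑(hM.eigenvectorBasis i), ?_, hM.mulVec_eigenvectorBasis i⟩
    intro h0
    apply hM.eigenvectorBasis.orthonormal.ne_zero i
    ext j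
    exact congrFun h0 j

/-- The set of nonzero singular values. -/
def sposSet {m k : ℕ} (A : Matrix (Fin m) (Fin k) ℝ) : Set ℝ :=
  {x | x ≠ 0 ∧ ∃ i, svals A i = x}

lemma sposSet_eq {m k : ℕ} (A : Matrix (Fin m) (Fin k) ℝ) :
    sposSet A = Real.sqrt '' {μ | μ ≠ 0 ∧ HasPair (Aᵀ * A) μ} := by
  have hherm := Matrix.isHermitian_conjTranspose_mul_self A
  ext x
  constructor
  · rintro ⟨hx, i, rfl⟩
    refine ⟨hherm.eigenvalues (Tuple.sort hherm.eigenvalues i.rev), ⟨?_, ?_⟩, rfl⟩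
    · intro h0
      apply hx
      show Real.sqrt _ = 0
      rw [h0, Real.sqrt_zero]
    · exact (hasPair_iff_eig hherm).mpr ⟨_, rfl⟩
  · rintro ⟨μ, ⟨hμ, hpair⟩, rfl⟩
    obtain ⟨j, hj⟩ := (hasPair_iff_eig hherm).mp hpair
    have hnn : 0 ≤ μ := pair_nonneg A hpair
    refine ⟨(Real.sqrt_pos.mpr (lt_of_le_of_ne hnn (Ne.symm hμ))).ne', ?_⟩
    refine ⟨((Tuple.sort hherm.eigenvalues).symm j).rev, ?_⟩
    show Real.sqrt _ = _
    rw [Fin.rev_rev, Equiv.apply_symm_apply, hj]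

lemma sqrt_pow' {x : ℝ} (hx : 0 ≤ x) (p : ℕ) : Real.sqrt (x ^ p) = (Real.sqrt x) ^ p := by
  rw [show x ^ p = ((Real.sqrt x) ^ p) ^ 2 by
        rw [← pow_mul, mul_comm, pow_mul, Real.sq_sqrt hx],
    Real.sqrt_sq (by positivity)]

lemma kappa_pow_eq {m k m' k' : ℕ} (A : Matrix (Fin m) (Fin k) ℝ)
    (B : Matrix (Fin m') (Fin k') ℝ) {p : ℕ} (hp : p ≠ 0)
    (hS : sposSet B = (fun x => x ^ p) '' sposSet A) :
    kappa A ^ p = kappa B := by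
  have hk : ∀ {m k : ℕ} (C : Matrix (Fin m) (Fin k) ℝ),
      kappa C = sSup {x | ∃ s ∈ sposSet C, ∃ t ∈ sposSet C, x = s / t} := by
    intro m k C
    unfold kappa
    congr 1
    ext x
    constructor
    · rintro ⟨i, j, hi, hj, rfl⟩
      exact ⟨_, ⟨hi, i, rfl⟩, _, ⟨hj, j, rfl⟩, rfl⟩
    · rintro ⟨s, ⟨hs0, i, rfl⟩, t, ⟨ht0, j, rfl⟩, rfl⟩
      exact ⟨i, j, hs0, ht0, rfl⟩
  have hposA : ∀ x ∈ sposSet A, 0 < x := by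
    rintro x ⟨hx, i, rfl⟩
    exact lt_of_le_of_ne (Real.sqrt_nonneg _) (Ne.symm hx)
  have hfinA : (sposSet A).Finite :=
    (Set.finite_range (svals A)).subset (by rintro x ⟨hx, i, rfl⟩; exact ⟨i, rfl⟩)
  rcases Set.eq_empty_or_nonempty (sposSet A) with he | hne
  · have heB : sposSet B = ∅ := by rw [hS, he, Set.image_empty]
    rw [hk A, hk B, he, heB]
    have hemp : {x : ℝ | ∃ s ∈ (∅ : Set ℝ), ∃ t ∈ (∅ : Set ℝ), x = s / t} = ∅ := by
      ext y; simp
    rw [hemp, Real.sSup_empty, zero_pow hp]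
  · set a := sSup (sposSet A) with ha
    set b := sInf (sposSet A) with hb
    have haS : a ∈ sposSet A := hne.csSup_mem hfinA
    have hbS : b ∈ sposSet A := hne.csInf_mem hfinA
    have hbpos : 0 < b := hposA b hbS
    have hapos : 0 < a := hposA a haS
    have hgA : IsGreatest {x | ∃ s ∈ sposSet A, ∃ t ∈ sposSet A, x = s / t} (a / b) := by
      refine ⟨⟨a, haS, b, hbS, rfl⟩, ?_⟩
      rintro x ⟨s, hs, t, ht, rfl⟩
      exact div_le_div₀ hapos.le (le_csSup hfinA.bddAbove hs) hbpos
        (csInf_le hfinA.bddBelow ht)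
    have hgB : IsGreatest {x | ∃ s ∈ sposSet B, ∃ t ∈ sposSet B, x = s / t}
        (a ^ p / b ^ p) := by
      constructor
      · exact ⟨a ^ p, by rw [hS]; exact ⟨a, haS, rfl⟩,
          b ^ p, by rw [hS]; exact ⟨b, hbS, rfl⟩, rfl⟩
      · rintro x ⟨s', hs', t', ht', rfl⟩
        rw [hS] at hs' ht'
        obtain ⟨s, hs, rfl⟩ := hs'
        obtain ⟨t, ht, rfl⟩ := ht'
        refine div_le_div₀ (by positivity)
          (pow_le_pow_left₀ (hposA s hs).le (le_csSup hfinA.bddAbove hs) p)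
          (by positivity)
          (pow_le_pow_left₀ hbpos.le (csInf_le hfinA.bddBelow ht) p)
    rw [hk A, hk B, hgA.csSup_eq, hgB.csSup_eq, div_pow]

lemma mul_pow_sandwich {m k : ℕ} (A : Matrix (Fin m) (Fin k) ℝ) (j : ℕ) :
    A * (Aᵀ * A) ^ j * Aᵀ = (A * Aᵀ) ^ (j + 1) := by
  induction j with
  | zero => rw [pow_zero, Matrix.mul_one, pow_one]
  | succ j ih =>
    rw [pow_succ, pow_succ, ← ih]
    simp only [Matrix.mul_assoc]

end AuxStatement16

/-- exactly balanced linear layers give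
`(W_L W_Lᵀ)^{L2} = W_{L:L1+1} W_{L:L1+1}ᵀ` and `κ(W_L)^{L2} = κ(W_{L:L1+1})`. -/
theorem statement16
    (L1 L2 L : ℕ) (hL2 : 1 ≤ L2) (hLdef : L = L1 + L2)
    (n : ℕ → ℕ)
    (W : ∀ ℓ : ℕ, Matrix (Fin (n ℓ)) (Fin (n (ℓ - 1))) ℝ)
    -- partial products of the linear head: G ℓ = W_L ⋯ W_{ℓ+1}
    (G : ∀ ℓ : ℕ, Matrix (Fin (n L)) (Fin (n ℓ)) ℝ)
    (hGL : G L = 1)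
    (hGrec : ∀ ℓ, L1 ≤ ℓ → ℓ < L → G ℓ = G (ℓ + 1) * W (ℓ + 1))
    -- exact balancedness
    (hbal : ∀ ℓ, L1 + 1 ≤ ℓ → ℓ ≤ L - 1 →
      W ℓ * (W ℓ)ᵀ =
        (show Matrix (Fin (n ℓ)) (Fin (n ℓ)) ℝ from (W (ℓ + 1))ᵀ * W (ℓ + 1))) :
    (W L * (W L)ᵀ) ^ L2 = G L1 * (G L1)ᵀ ∧
    kappa (W L) ^ L2 = kappa (G L1) := by
  subst hLdef
  -- Step 1: the balancedness recursion.
  have key : ∀ t : ℕ, ∀ s : ℕ, s + t = L2 → 1 ≤ s →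
      G (L1 + s) * (W (L1 + s) * (W (L1 + s))ᵀ) ^ s * (G (L1 + s))ᵀ
        = (W (L1 + L2) * (W (L1 + L2))ᵀ) ^ L2 := by
    intro t
    induction t with
    | zero =>
      intro s hs _
      have hsl : s = L2 := by omega
      subst hsl
      rw [hGL, Matrix.one_mul, Matrix.transpose_one, Matrix.mul_one]
    | succ t ih =>
      intro s hs hs1
      obtain ⟨s', rfl⟩ : ∃ s', s = s' + 1 := ⟨s - 1, by omega⟩
      show G (L1 + s' + 1) * (W (L1 + s' + 1) * (W (L1 + s' + 1))ᵀ) ^ (s' + 1) *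
          (G (L1 + s' + 1))ᵀ = (W (L1 + L2) * (W (L1 + L2))ᵀ) ^ L2
      have hb := hbal (L1 + s' + 1) (by omega) (by omega)
      have hg := hGrec (L1 + s' + 1) (by omega) (by omega)
      rw [hg, hb, Matrix.transpose_mul]
      have step : G (L1 + s' + 1 + 1) * W (L1 + s' + 1 + 1) *
            ((W (L1 + s' + 1 + 1))ᵀ * W (L1 + s' + 1 + 1)) ^ (s' + 1) *
            ((W (L1 + s' + 1 + 1))ᵀ * (G (L1 + s' + 1 + 1))ᵀ)
          = G (L1 + s' + 1 + 1) *
            (W (L1 + s' + 1 + 1) * (W (L1 + s' + 1 + 1))ᵀ) ^ (s' + 1 + 1) *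
            (G (L1 + s' + 1 + 1))ᵀ := by
        rw [← mul_pow_sandwich (W (L1 + s' + 1 + 1)) (s' + 1)]
        simp only [Matrix.mul_assoc]
      rw [step]
      exact ih (s' + 2) (by omega) (by omega)
  have part1 : (W (L1 + L2) * (W (L1 + L2))ᵀ) ^ L2 = G L1 * (G L1)ᵀ := by
    have hg0 := hGrec L1 le_rfl (by omega)
    have k1 := key (L2 - 1) 1 (by omega) le_rfl
    rw [hg0, ← k1, pow_one, Matrix.transpose_mul]
    simp only [Matrix.mul_assoc]
  refine ⟨part1, ?_⟩
  -- Step 2: relation between the nonzero eigenvalue sets.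
  set B := W (L1 + L2) * (W (L1 + L2))ᵀ with hBdef
  have hGG : G L1 * (G L1)ᵀ = B ^ L2 := part1.symm
  have hBsym : Bᵀ = B := by
    rw [hBdef, Matrix.transpose_mul, Matrix.transpose_transpose]
  have hBh : B.IsHermitian := isHermitian_of_symm hBsym
  have hpowsym : (B ^ L2)ᵀ = B ^ L2 := by rw [Matrix.transpose_pow, hBsym]
  have hNE : {μ : ℝ | μ ≠ 0 ∧ HasPair ((G L1)ᵀ * G L1) μ}
      = (fun x => x ^ L2) ''
        {μ : ℝ | μ ≠ 0 ∧ HasPair ((W (L1 + L2))ᵀ * W (L1 + L2)) μ} := by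
    ext μ
    constructor
    · rintro ⟨hμ, hp⟩
      have hp2 : HasPair (G L1 * (G L1)ᵀ) μ := hasPair_swap (G L1) hμ hp
      rw [hGG] at hp2
      obtain ⟨i, hi⟩ := pair_eq_of_basis hpowsym hBh.eigenvectorBasis
        (fun i => hBh.eigenvalues i ^ L2)
        (fun i => pow_mulVec (hBh.mulVec_eigenvectorBasis i) L2) hp2
      have hν : hBh.eigenvalues i ≠ 0 := by
        intro h0
        apply hμ
        rw [← hi, h0, zero_pow (by omega)]
      refine ⟨hBh.eigenvalues i, ⟨hν, ?_⟩, hi⟩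
      have hpB : HasPair B (hBh.eigenvalues i) := (hasPair_iff_eig hBh).mpr ⟨i, rfl⟩
      have hpB' : HasPair ((W (L1 + L2))ᵀᵀ * (W (L1 + L2))ᵀ) (hBh.eigenvalues i) := by
        rwa [Matrix.transpose_transpose]
      have hres := hasPair_swap (W (L1 + L2))ᵀ hν hpB'
      rwa [Matrix.transpose_transpose] at hres
    · rintro ⟨ν, ⟨hν, hp⟩, rfl⟩
      refine ⟨pow_ne_zero _ hν, ?_⟩
      have hp2 : HasPair (W (L1 + L2) * (W (L1 + L2))ᵀ) ν :=
        hasPair_swap (W (L1 + L2)) hν hp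
      obtain ⟨v, hv, hMv⟩ := hp2
      have hp3 : HasPair (B ^ L2) (ν ^ L2) := ⟨v, hv, pow_mulVec hMv L2⟩
      rw [← hGG] at hp3
      have hp4 : HasPair (((G L1)ᵀ)ᵀ * (G L1)ᵀ) (ν ^ L2) := by
        rwa [Matrix.transpose_transpose]
      have hp5 := hasPair_swap (G L1)ᵀ (pow_ne_zero _ hν) hp4
      rwa [Matrix.transpose_transpose] at hp5
  have hSpos : sposSet (G L1) = (fun x => x ^ L2) '' sposSet (W (L1 + L2)) := by
    rw [sposSet_eq, sposSet_eq, hNE, Set.image_image, Set.image_image]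
    apply Set.image_congr
    intro μ hμ
    exact sqrt_pow' (pair_nonneg _ hμ.2) L2
  exact kappa_pow_eq (W (L1 + L2)) (G L1) (by omega) hSpos
end
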